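/- For a fixed l ≥ 0, the generating function ∑_{n≥0} F_{h,n}^{l}·t^n equals t^{2l+1}·[F_{h,2l+1} + (F_{h,2l+2} − h·F_{h,2l+1})·t − t²/(1−h·t)^{l+1}] / (1 − h·t − t²), as an identity of formal power series (or for real t in a neighborhood of 0), where F_{h,n}^{l} is interpreted as 0 for n < 2l+1. -/

import Mathlib

open Finset

/-- Incomplete h-Fibonacci polynomials: F_{h,n}^l = ∑_{i=0}^l C(n-1-i,i) h^(n-1-2i). -/
noncomputable def incF (h : ℝ) (n l : ℕ) : ℝ :=
  ∑ i ∈ Finset.range (l + 1), (Nat.choose (n - 1 - i) i : ℝ) * h ^ (n - 1 - 2 * i)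

/-- Incomplete h-Lucas polynomials: L_{h,n}^l = ∑_{i=0}^l (n/(n-i)) C(n-i,i) h^(n-2i). -/
noncomputable def incL (h : ℝ) (n l : ℕ) : ℝ :=
  ∑ i ∈ Finset.range (l + 1), ((n : ℝ) / ((n - i : ℕ) : ℝ)) * (Nat.choose (n - i) i : ℝ) * h ^ (n - 2 * i)

/-- h-Fibonacci sequence. -/
noncomputable def Fh (h : ℝ) : ℕ → ℝ
  | 0 => 0
  | 1 => 1
  | n + 2 => h * Fh h (n + 1) + Fh h n

/-- h-Lucas sequence. -/
noncomputable def Lh (h : ℝ) : ℕ → ℝ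
  | 0 => 2
  | 1 => h
  | n + 2 => h * Lh h (n + 1) + Lh h n

open PowerSeries

noncomputable def Rser (h : ℝ) (l : ℕ) : PowerSeries ℝ :=
  PowerSeries.mk fun m => (Nat.choose (m + l) l : ℝ) * h ^ m

lemma mul_one_sub_coeff (φ : PowerSeries ℝ) (h : ℝ) (n : ℕ) :
    coeff n (φ * (1 - C h * X)) =
      coeff n φ - h * (if 1 ≤ n then coeff (n - 1) φ else 0) := by
  have e : φ * (1 - C h * X) = φ - C h * (φ * X ^ 1) := by ring
  rw [e, map_sub, coeff_C_mul, coeff_mul_X_pow']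

lemma Rser_base (h : ℝ) : Rser h 0 * (1 - C h * X) = 1 := by
  ext n
  rw [mul_one_sub_coeff]
  rcases n with _ | n
  · simp [Rser]
  · simp [Rser, coeff_one, pow_succ]
    ring

lemma Rser_step (h : ℝ) (l : ℕ) : Rser h (l + 1) * (1 - C h * X) = Rser h l := by
  ext n
  rw [mul_one_sub_coeff]
  rcases n with _ | n
  · simp [Rser]
  · simp only [Rser, coeff_mk, if_pos (Nat.one_le_iff_ne_zero.mpr (Nat.succ_ne_zero n)),
      Nat.add_sub_cancel]
    have e : n + 1 + (l + 1) = (n + l + 1) + 1 := by omega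
    rw [e, Nat.choose_succ_succ]
    have e2 : n + 1 + l = n + l + 1 := by omega
    rw [e2, Nat.succ_eq_add_one, pow_succ]
    push_cast
    ring_nf

lemma Rser_mul (h : ℝ) (l : ℕ) : Rser h l * (1 - C h * X) ^ (l + 1) = 1 := by
  induction l with
  | zero => simpa using Rser_base h
  | succ l ih =>
      have : (1 - C h * X) ^ (l + 2) = (1 - C h * X) * (1 - C h * X) ^ (l + 1) := by ring
      rw [this, ← mul_assoc, Rser_step, ih]

lemma incF_reflect (h : ℝ) (l s : ℕ) :
    incF h (2 * l + 1 + s) l =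
      ∑ j ∈ Finset.range (l + 1), (Nat.choose (s + l + j) (l - j) : ℝ) * h ^ (s + 2 * j) := by
  rw [incF, ← Finset.sum_range_reflect]
  refine Finset.sum_congr rfl fun j hj => ?_
  simp only [Finset.mem_range] at hj
  have e1 : l + 1 - 1 - j = l - j := by omega
  rw [e1]
  have e2 : 2 * l + 1 + s - 1 - (l - j) = s + l + j := by omega
  have e3 : 2 * l + 1 + s - 1 - 2 * (l - j) = s + 2 * j := by omega
  rw [e2, e3]

noncomputable def Aa (h : ℝ) (l : ℕ) : ℝ :=
  ∑ j ∈ Finset.range (l + 1), (Nat.choose (l + j) (l - j) : ℝ) * h ^ (2 * j)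

noncomputable def Bb (h : ℝ) (l : ℕ) : ℝ :=
  ∑ j ∈ Finset.range (l + 1), (Nat.choose (l + 1 + j) (l - j) : ℝ) * h ^ (2 * j + 1)

lemma incF_A (h : ℝ) (l : ℕ) : incF h (2 * l + 1) l = Aa h l := by
  have := incF_reflect h l 0
  simp only [add_zero] at this
  rw [this, Aa]
  refine Finset.sum_congr rfl fun j hj => ?_
  rw [show 0 + l + j = l + j by omega, show (0 + 2 * j) = 2 * j by omega]

lemma incF_B (h : ℝ) (l : ℕ) : incF h (2 * l + 2) l = Bb h l := by
  have := incF_reflect h l 1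
  rw [show 2 * l + 1 + 1 = 2 * l + 2 by omega] at this
  rw [this, Bb]
  refine Finset.sum_congr rfl fun j hj => ?_
  rw [show 1 + l + j = l + 1 + j by omega, show (1 + 2 * j) = 2 * j + 1 by omega]

lemma Aa_succ (h : ℝ) (l : ℕ) : Aa h (l + 1) = h * Bb h l + Aa h l := by
  rw [Aa, Finset.sum_range_succ]
  have e : ∀ j ∈ Finset.range (l + 1),
      (Nat.choose (l + 1 + j) (l + 1 - j) : ℝ) * h ^ (2 * j) =
        (Nat.choose (l + j) (l + 1 - j) : ℝ) * h ^ (2 * j) +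
          (Nat.choose (l + j) (l - j) : ℝ) * h ^ (2 * j) := by
    intro j hj
    simp only [Finset.mem_range] at hj
    rw [show l + 1 + j = (l + j) + 1 by omega, show l + 1 - j = (l - j) + 1 by omega,
      Nat.choose_succ_succ]
    push_cast
    ring
  rw [Finset.sum_congr rfl e, Finset.sum_add_distrib]
  have e2 : ∑ j ∈ Finset.range (l + 1), (Nat.choose (l + j) (l + 1 - j) : ℝ) * h ^ (2 * j) +
      (Nat.choose (l + 1 + (l + 1)) (l + 1 - (l + 1)) : ℝ) * h ^ (2 * (l + 1)) = h * Bb h l := by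
    rw [Bb, Finset.mul_sum]
    rw [Finset.sum_range_succ']
    simp only [Nat.sub_self, Nat.choose_zero_right]
    have e3 : ∀ j ∈ Finset.range l,
        (Nat.choose (l + (j + 1)) (l + 1 - (j + 1)) : ℝ) * h ^ (2 * (j + 1)) =
          h * ((Nat.choose (l + 1 + j) (l - j) : ℝ) * h ^ (2 * j + 1)) := by
      intro j hj
      rw [show l + (j + 1) = l + 1 + j by omega, show l + 1 - (j + 1) = l - j by omega,
        show 2 * (j + 1) = (2 * j + 1) + 1 by omega, pow_succ]
      ring
    rw [Finset.sum_congr rfl e3]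
    have e4 : (Nat.choose (l + 0) (l + 1 - 0) : ℝ) * h ^ (2 * 0) = 0 := by
      rw [Nat.choose_eq_zero_of_lt (by omega)]
      simp
    have e5 : (Nat.choose (l + 1 + l) (l - l) : ℝ) * h ^ (2 * l + 1) * h = 1 * h ^ (2 * (l + 1)) := by
      rw [Nat.sub_self, Nat.choose_zero_right, show 2 * (l + 1) = (2 * l + 1) + 1 by omega, pow_succ]
      push_cast; ring
    rw [Finset.sum_range_succ, e4]
    rw [Nat.sub_self, Nat.choose_zero_right]
    push_cast
    ring
  rw [Aa]
  linarith [e2]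

lemma Bb_succ (h : ℝ) (l : ℕ) : Bb h (l + 1) = h * Aa h (l + 1) + Bb h l := by
  rw [Bb, Finset.sum_range_succ]
  have e : ∀ j ∈ Finset.range (l + 1),
      (Nat.choose (l + 1 + 1 + j) (l + 1 - j) : ℝ) * h ^ (2 * j + 1) =
        (Nat.choose (l + 1 + j) (l + 1 - j) : ℝ) * h ^ (2 * j + 1) +
          (Nat.choose (l + 1 + j) (l - j) : ℝ) * h ^ (2 * j + 1) := by
    intro j hj
    simp only [Finset.mem_range] at hj
    rw [show l + 1 + 1 + j = (l + 1 + j) + 1 by omega, show l + 1 - j = (l - j) + 1 by omega,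
      Nat.choose_succ_succ]
    push_cast
    ring
  rw [Finset.sum_congr rfl e, Finset.sum_add_distrib]
  have e2 : ∑ j ∈ Finset.range (l + 1), (Nat.choose (l + 1 + j) (l + 1 - j) : ℝ) * h ^ (2 * j + 1) +
      (Nat.choose (l + 1 + 1 + (l + 1)) (l + 1 - (l + 1)) : ℝ) * h ^ (2 * (l + 1) + 1) =
        h * Aa h (l + 1) := by
    conv_rhs => rw [Aa, Finset.mul_sum, Finset.sum_range_succ]
    have e3 : ∀ j ∈ Finset.range (l + 1),
        h * ((Nat.choose (l + 1 + j) (l + 1 - j) : ℝ) * h ^ (2 * j)) =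
          (Nat.choose (l + 1 + j) (l + 1 - j) : ℝ) * h ^ (2 * j + 1) := by
      intro j hj
      rw [pow_succ]
      ring
    rw [Finset.sum_congr rfl e3]
    simp only [Nat.sub_self, Nat.choose_zero_right]
    push_cast
    ring
  rw [Bb]
  linarith [e2]

lemma Aa_Bb_eq_Fh (h : ℝ) (l : ℕ) :
    Aa h l = Fh h (2 * l + 1) ∧ Bb h l = Fh h (2 * l + 2) := by
  induction l with
  | zero =>
      constructor
      · simp [Aa, Fh]
      · simp [Bb, Fh]
  | succ l ih =>
      obtain ⟨ha, hb⟩ := ih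
      have hA : Aa h (l + 1) = Fh h (2 * (l + 1) + 1) := by
        rw [Aa_succ, ha, hb, show 2 * (l + 1) + 1 = (2 * l + 1) + 2 by omega]
        rw [show Fh h ((2 * l + 1) + 2) = h * Fh h (2 * l + 2) + Fh h (2 * l + 1) from rfl]
      refine ⟨hA, ?_⟩
      rw [Bb_succ, hA, hb, show 2 * (l + 1) + 2 = (2 * (l + 1)) + 2 by omega]
      rw [show Fh h (2 * (l + 1) + 2) = h * Fh h (2 * (l + 1) + 1) + Fh h (2 * (l + 1)) from rfl]
      rw [show 2 * (l + 1) = 2 * l + 2 by omega]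

lemma incF_Fh1 (h : ℝ) (l : ℕ) : incF h (2 * l + 1) l = Fh h (2 * l + 1) := by
  rw [incF_A]; exact (Aa_Bb_eq_Fh h l).1

lemma incF_Fh2 (h : ℝ) (l : ℕ) : incF h (2 * l + 2) l = Fh h (2 * l + 2) := by
  rw [incF_B]; exact (Aa_Bb_eq_Fh h l).2

lemma key (h : ℝ) (l m : ℕ) :
    incF h (2 * l + 3 + m) l + (Nat.choose (m + l) l : ℝ) * h ^ m =
      h * incF h (2 * l + 2 + m) l + incF h (2 * l + 1 + m) l := by
  have r3 := incF_reflect h l (m + 2)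
  rw [show 2 * l + 1 + (m + 2) = 2 * l + 3 + m by omega] at r3
  have r2 := incF_reflect h l (m + 1)
  rw [show 2 * l + 1 + (m + 1) = 2 * l + 2 + m by omega] at r2
  have r1 := incF_reflect h l m
  rw [r1, r2, r3]
  have E3 : ∑ j ∈ Finset.range (l + 1), (Nat.choose (m + 2 + l + j) (l - j) : ℝ) * h ^ (m + 2 + 2 * j) =
      (∑ j ∈ Finset.range l, (Nat.choose (m + 1 + l + j) (l - j) : ℝ) * h ^ (m + 2 + 2 * j)) +
      (∑ j ∈ Finset.range l, (Nat.choose (m + 1 + l + j) (l - 1 - j) : ℝ) * h ^ (m + 2 + 2 * j)) +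
      h ^ (m + 2 + 2 * l) := by
    rw [Finset.sum_range_succ]
    have p : ∀ j ∈ Finset.range l,
        (Nat.choose (m + 2 + l + j) (l - j) : ℝ) * h ^ (m + 2 + 2 * j) =
          (Nat.choose (m + 1 + l + j) (l - j) : ℝ) * h ^ (m + 2 + 2 * j) +
            (Nat.choose (m + 1 + l + j) (l - 1 - j) : ℝ) * h ^ (m + 2 + 2 * j) := by
      intro j hj
      simp only [Finset.mem_range] at hj
      rw [show m + 2 + l + j = (m + 1 + l + j) + 1 by omega,
        show l - j = (l - 1 - j) + 1 by omega, Nat.choose_succ_succ]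
      push_cast
      ring
    rw [Finset.sum_congr rfl p, Finset.sum_add_distrib]
    simp only [Nat.sub_self, Nat.choose_zero_right]
    push_cast
    ring
  have E2 : h * ∑ j ∈ Finset.range (l + 1), (Nat.choose (m + 1 + l + j) (l - j) : ℝ) * h ^ (m + 1 + 2 * j) =
      (∑ j ∈ Finset.range l, (Nat.choose (m + 1 + l + j) (l - j) : ℝ) * h ^ (m + 2 + 2 * j)) +
      h ^ (m + 2 + 2 * l) := by
    rw [Finset.mul_sum, Finset.sum_range_succ]
    have p : ∀ j ∈ Finset.range l,
        h * ((Nat.choose (m + 1 + l + j) (l - j) : ℝ) * h ^ (m + 1 + 2 * j)) =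
          (Nat.choose (m + 1 + l + j) (l - j) : ℝ) * h ^ (m + 2 + 2 * j) := by
      intro j hj
      rw [show m + 2 + 2 * j = (m + 1 + 2 * j) + 1 by omega, pow_succ]
      ring
    rw [Finset.sum_congr rfl p]
    simp only [Nat.sub_self, Nat.choose_zero_right]
    rw [show m + 2 + 2 * l = (m + 1 + 2 * l) + 1 by omega, pow_succ]
    push_cast
    ring
  have E1 : ∑ j ∈ Finset.range (l + 1), (Nat.choose (m + l + j) (l - j) : ℝ) * h ^ (m + 2 * j) =
      (Nat.choose (m + l) l : ℝ) * h ^ m +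
      (∑ j ∈ Finset.range l, (Nat.choose (m + 1 + l + j) (l - 1 - j) : ℝ) * h ^ (m + 2 + 2 * j)) := by
    rw [Finset.sum_range_succ']
    have p : ∀ j ∈ Finset.range l,
        (Nat.choose (m + l + (j + 1)) (l - (j + 1)) : ℝ) * h ^ (m + 2 * (j + 1)) =
          (Nat.choose (m + 1 + l + j) (l - 1 - j) : ℝ) * h ^ (m + 2 + 2 * j) := by
      intro j hj
      rw [show m + l + (j + 1) = m + 1 + l + j by omega, show l - (j + 1) = l - 1 - j by omega,
        show m + 2 * (j + 1) = m + 2 + 2 * j by omega]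
    rw [Finset.sum_congr rfl p]
    simp only [Nat.add_zero, Nat.sub_zero, Nat.mul_zero]
    ring
  rw [E1, E2, E3]
  ring

lemma ring_split (h : ℝ) (φ : PowerSeries ℝ) :
    φ * (1 - C h * X - X ^ 2) = φ - C h * (φ * X ^ 1) - φ * X ^ 2 := by ring

lemma main_mul (h : ℝ) (l : ℕ) :
    (PowerSeries.mk fun n => if n < 2 * l + 1 then 0 else incF h n l) * (1 - C h * X - X ^ 2) =
      C (Fh h (2 * l + 1)) * X ^ (2 * l + 1) +
        C (Fh h (2 * l + 2) - h * Fh h (2 * l + 1)) * X ^ (2 * l + 2) -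
        Rser h l * X ^ (2 * l + 3) := by
  rw [ring_split]
  ext n
  simp only [map_sub, map_add, coeff_C_mul, coeff_mul_X_pow', coeff_mk, PowerSeries.coeff_C,
    Rser]
  rcases Nat.lt_or_ge n (2 * l + 1) with hn | hn
  · rw [if_pos hn, if_neg (by omega : ¬ (2 * l + 1 ≤ n)), if_neg (by omega : ¬ (2 * l + 2 ≤ n)),
      if_neg (by omega : ¬ (2 * l + 3 ≤ n))]
    have h1 : (if 1 ≤ n then (if n - 1 < 2 * l + 1 then (0:ℝ) else incF h (n - 1) l) else 0) = 0 := by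
      split_ifs <;> first | rfl | omega
    have h2 : (if 2 ≤ n then (if n - 2 < 2 * l + 1 then (0:ℝ) else incF h (n - 2) l) else 0) = 0 := by
      split_ifs <;> first | rfl | omega
    rw [h1, h2]; ring
  rcases Nat.lt_or_ge n (2 * l + 2) with hn2 | hn2
  · have hne : n = 2 * l + 1 := by omega
    subst hne
    rw [if_neg (by omega : ¬ (2 * l + 1 < 2 * l + 1)), if_pos (by omega : 2 * l + 1 ≤ 2 * l + 1),
      if_pos (by omega : 2 * l + 1 - (2 * l + 1) = 0),
      if_neg (by omega : ¬ (2 * l + 2 ≤ 2 * l + 1)), if_neg (by omega : ¬ (2 * l + 3 ≤ 2 * l + 1)),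
      if_pos (by omega : 1 ≤ 2 * l + 1), if_pos (by omega : 2 * l + 1 - 1 < 2 * l + 1)]
    have h2 : (if 2 ≤ 2 * l + 1 then
        (if 2 * l + 1 - 2 < 2 * l + 1 then (0:ℝ) else incF h (2 * l + 1 - 2) l) else 0) = 0 := by
      split_ifs <;> first | rfl | omega
    rw [h2, incF_Fh1]; ring
  rcases Nat.lt_or_ge n (2 * l + 3) with hn3 | hn3
  · have hne : n = 2 * l + 2 := by omega
    subst hne
    rw [if_neg (by omega : ¬ (2 * l + 2 < 2 * l + 1)), if_pos (by omega : 2 * l + 1 ≤ 2 * l + 2),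
      if_neg (by omega : ¬ (2 * l + 2 - (2 * l + 1) = 0)),
      if_pos (by omega : 2 * l + 2 ≤ 2 * l + 2), if_pos (by omega : 2 * l + 2 - (2 * l + 2) = 0),
      if_pos (by omega : 2 * l + 2 - (2 * l + 2) = 0),
      if_neg (by omega : ¬ (2 * l + 3 ≤ 2 * l + 2)),
      if_pos (by omega : 1 ≤ 2 * l + 2), if_pos (by omega : 2 ≤ 2 * l + 2),
      if_neg (by omega : ¬ (2 * l + 2 - 1 < 2 * l + 1)),
      if_pos (by omega : 2 * l + 2 - 2 < 2 * l + 1),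
      show 2 * l + 2 - 1 = 2 * l + 1 by omega, incF_Fh1, incF_Fh2]
    ring
  · obtain ⟨m, rfl⟩ : ∃ m, n = 2 * l + 3 + m := ⟨n - (2 * l + 3), by omega⟩
    rw [if_neg (by omega : ¬ (2 * l + 3 + m < 2 * l + 1)),
      if_pos (by omega : 2 * l + 1 ≤ 2 * l + 3 + m),
      if_neg (by omega : ¬ (2 * l + 3 + m - (2 * l + 1) = 0)),
      if_pos (by omega : 2 * l + 2 ≤ 2 * l + 3 + m),
      if_neg (by omega : ¬ (2 * l + 3 + m - (2 * l + 2) = 0)),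
      if_neg (by omega : ¬ (2 * l + 3 + m - (2 * l + 2) = 0)),
      if_pos (by omega : 2 * l + 3 ≤ 2 * l + 3 + m),
      if_pos (by omega : 1 ≤ 2 * l + 3 + m), if_pos (by omega : 2 ≤ 2 * l + 3 + m),
      if_neg (by omega : ¬ (2 * l + 3 + m - 1 < 2 * l + 1)),
      if_neg (by omega : ¬ (2 * l + 3 + m - 2 < 2 * l + 1)),
      show 2 * l + 3 + m - 1 = 2 * l + 2 + m by omega,
      show 2 * l + 3 + m - 2 = 2 * l + 1 + m by omega,
      show 2 * l + 3 + m - (2 * l + 3) = m by omega]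
    linarith [key h l m]

open PowerSeries in
theorem incF_generating_function (h : ℝ) (l : ℕ) :
    (PowerSeries.mk fun n => if n < 2 * l + 1 then 0 else incF h n l) =
      (X : PowerSeries ℝ) ^ (2 * l + 1) *
        (C (Fh h (2 * l + 1)) + C (Fh h (2 * l + 2) - h * Fh h (2 * l + 1)) * X -
          X ^ 2 * ((1 - C h * X) ^ (l + 1))⁻¹) *
        (1 - C h * X - X ^ 2)⁻¹ := by
  have hQ : constantCoeff (1 - C h * X - X ^ 2 : PowerSeries ℝ) ≠ 0 := by
    simp
  have hP : constantCoeff ((1 - C h * X) ^ (l + 1) : PowerSeries ℝ) ≠ 0 := by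
    simp
  have hinv : (((1 - C h * X) ^ (l + 1) : PowerSeries ℝ))⁻¹ = Rser h l :=
    (PowerSeries.inv_eq_iff_mul_eq_one hP).mpr (Rser_mul h l)
  rw [hinv]
  have hc : (1 - C h * X - X ^ 2 : PowerSeries ℝ) * (1 - C h * X - X ^ 2)⁻¹ = 1 :=
    PowerSeries.mul_inv_cancel _ hQ
  calc (PowerSeries.mk fun n => if n < 2 * l + 1 then 0 else incF h n l)
      = (PowerSeries.mk fun n => if n < 2 * l + 1 then 0 else incF h n l) *
          ((1 - C h * X - X ^ 2) * (1 - C h * X - X ^ 2)⁻¹) := by rw [hc, mul_one]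
    _ = ((PowerSeries.mk fun n => if n < 2 * l + 1 then 0 else incF h n l) *
          (1 - C h * X - X ^ 2)) * (1 - C h * X - X ^ 2)⁻¹ := by ring
    _ = (C (Fh h (2 * l + 1)) * X ^ (2 * l + 1) +
          C (Fh h (2 * l + 2) - h * Fh h (2 * l + 1)) * X ^ (2 * l + 2) -
          Rser h l * X ^ (2 * l + 3)) * (1 - C h * X - X ^ 2)⁻¹ := by rw [main_mul]
    _ = (X : PowerSeries ℝ) ^ (2 * l + 1) *
          (C (Fh h (2 * l + 1)) + C (Fh h (2 * l + 2) - h * Fh h (2 * l + 1)) * X -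
            X ^ 2 * Rser h l) * (1 - C h * X - X ^ 2)⁻¹ := by ring
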